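/- Let H ∈ ℂ^{n×n} be Hermitian with eigenvalues λ_1 ≥ ⋯ ≥ λ_n satisfying λ_k > λ_{k+1}, and let P_* ∈ ℂ^{n×k} have orthonormal columns spanning the invariant subspace of H associated with the k largest eigenvalues. For any P ∈ ℂ^{n×k} with orthonormal columns, setting η = tr(P_*ᴴ H P_*) − tr(Pᴴ H P), one has ‖sin Θ(R(P), R(P_*))‖_F ≤ √(η / (λ_k − λ_{k+1})). -/

import Mathlib

open scoped ComplexOrder
open Matrix

/-- The tuple `f` rearranged into decreasing order; `sortedDesc f 0` is the largest entry. -/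
noncomputable def sortedDesc {m : ℕ} (f : Fin m → ℝ) : Fin m → ℝ :=
  fun i => (f ∘ Tuple.sort f) i.rev

/-- The singular values of a complex matrix, in decreasing order. -/
noncomputable def sv {n k : ℕ} (B : Matrix (Fin n) (Fin k) ℂ) : Fin k → ℝ :=
  sortedDesc fun i =>
    Real.sqrt ((Matrix.posSemidef_conjTranspose_mul_self B).isHermitian.eigenvalues i)

/-- The trace (nuclear) norm: the sum of the singular values. -/
noncomputable def trNorm {n k : ℕ} (B : Matrix (Fin n) (Fin k) ℂ) : ℝ := ∑ i, sv B i

/-- The Frobenius norm. -/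
noncomputable def frobNorm {n k : ℕ} (A : Matrix (Fin n) (Fin k) ℂ) : ℝ :=
  Real.sqrt (∑ i, ∑ j, ‖A i j‖ ^ 2)

/-- `‖sin Θ(R(X), R(Y))‖_F` where `Θ` is the diagonal matrix of canonical angles
`θ_i = arccos σ_i(Xᴴ Y)` between the column spaces of `X` and `Y`. -/
noncomputable def sinThetaF {n k : ℕ} (X Y : Matrix (Fin n) (Fin k) ℂ) : ℝ :=
  Real.sqrt (∑ i, Real.sin (Real.arccos (sv (Xᴴ * Y) i)) ^ 2)

/-- The smallest singular value. -/
noncomputable def smin {n k : ℕ} (B : Matrix (Fin n) (Fin k) ℂ) : ℝ := ⨅ i, sv B i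

/-- The spectral norm (largest singular value). -/
noncomputable def s2norm {n k : ℕ} (B : Matrix (Fin n) (Fin k) ℂ) : ℝ := ⨆ i, sv B i

/-- The orthonormal polar factor `B (Bᴴ B)^{-1/2}` (for `B` of full column rank). -/
noncomputable def polarFactor {n k : ℕ} (B : Matrix (Fin n) (Fin k) ℂ) :
    Matrix (Fin n) (Fin k) ℂ :=
  B * (((Matrix.posSemidef_conjTranspose_mul_self B).1.eigenvectorUnitary : Matrix (Fin k) (Fin k) ℂ) *
    diagonal ((↑) ∘ (√·) ∘ (Matrix.posSemidef_conjTranspose_mul_self B).1.eigenvalues) *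
    (star (Matrix.posSemidef_conjTranspose_mul_self B).1.eigenvectorUnitary : Matrix (Fin k) (Fin k) ℂ))⁻¹

/-- Eigenvalues of a Hermitian matrix, in decreasing order. -/
noncomputable def eigsDesc {n : ℕ} {H : Matrix (Fin n) (Fin n) ℂ} (hH : H.IsHermitian) :
    Fin n → ℝ :=
  sortedDesc hH.eigenvalues


noncomputable def sdPerm {m : ℕ} (f : Fin m → ℝ) : Equiv.Perm (Fin m) :=
  Fin.revPerm.trans (Tuple.sort f)

lemma sortedDesc_eq_comp {m : ℕ} (f : Fin m → ℝ) : sortedDesc f = f ∘ (sdPerm f) := rfl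

lemma sum_comp_sortedDesc {m : ℕ} (f : Fin m → ℝ) (g : ℝ → ℝ) :
    ∑ i, g (sortedDesc f i) = ∑ i, g (f i) := by
  rw [sortedDesc_eq_comp]
  exact Equiv.sum_comp (sdPerm f) (fun i => g (f i))

lemma antitone_sortedDesc {m : ℕ} (f : Fin m → ℝ) : Antitone (sortedDesc f) := by
  intro i j h
  exact Tuple.monotone_sort f (Fin.rev_le_rev.mpr h)

lemma exists_sortedDesc_eq {m : ℕ} (f : Fin m → ℝ) (i : Fin m) :
    ∃ j, sortedDesc f j = f i := by
  exact ⟨(sdPerm f).symm i, by simp [sortedDesc_eq_comp]⟩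

lemma filter_sum_sortedDesc {m : ℕ} (f : Fin m → ℝ) (p : ℝ → Prop) [DecidablePred p]
    (g : ℝ → ℝ) :
    ∑ i ∈ Finset.univ.filter (fun i => p (sortedDesc f i)), g (sortedDesc f i)
      = ∑ i ∈ Finset.univ.filter (fun i => p (f i)), g (f i) := by
  rw [sortedDesc_eq_comp]
  exact Finset.sum_equiv (sdPerm f) (by simp) (fun i _ => rfl)

section psd
variable {n : ℕ}

lemma star_single_one (i : Fin n) : star (Pi.single i 1 : Fin n → ℂ) = Pi.single i 1 := by
  ext j
  simp [Pi.single_apply, apply_ite]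

lemma psd_diag_nonneg {A : Matrix (Fin n) (Fin n) ℂ} (hA : A.PosSemidef) (i : Fin n) :
    0 ≤ A i i := by
  have := hA.dotProduct_mulVec_nonneg (Pi.single i 1)
  simpa [star_single_one, Matrix.mulVec_single, single_dotProduct] using this

lemma psd_re_trace_nonneg {A : Matrix (Fin n) (Fin n) ℂ} (hA : A.PosSemidef) :
    0 ≤ A.trace.re := by
  rw [Matrix.trace]
  simp only [Complex.re_sum]
  exact Finset.sum_nonneg fun i _ => (Complex.le_def.mp (psd_diag_nonneg hA i)).1

lemma psd_trace_mul_re_nonneg {A B : Matrix (Fin n) (Fin n) ℂ}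
    (hA : A.PosSemidef) (hB : B.PosSemidef) : 0 ≤ (A * B).trace.re := by
  open scoped MatrixOrder in
  obtain ⟨C, hC⟩ := CStarAlgebra.nonneg_iff_eq_star_mul_self.mp hB.nonneg
  have h1 : (A * B).trace = (C * A * Cᴴ).trace := by
    rw [hC, ← Matrix.mul_assoc, Matrix.trace_mul_cycle, Matrix.star_eq_conjTranspose]
  rw [h1]
  exact psd_re_trace_nonneg (hA.mul_mul_conjTranspose_same C)

lemma psd_col_zero {A : Matrix (Fin n) (Fin n) ℂ} (hA : A.PosSemidef) {i : Fin n}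
    (h : A i i = 0) (j : Fin n) : A j i = 0 := by
  have h0 : dotProduct (star (Pi.single i 1 : Fin n → ℂ)) (A *ᵥ (Pi.single i 1)) = 0 := by
    simp [star_single_one, Matrix.mulVec_single, single_dotProduct]
    exact h
  have h2 := (hA.dotProduct_mulVec_zero_iff (Pi.single i 1)).mp h0
  have h3 := congrFun h2 j
  simpa [Matrix.mulVec_single] using h3

end psd

section herm
variable {n : ℕ} {X : Matrix (Fin n) (Fin n) ℂ}

lemma herm_trace_eq_sum_eigenvalues (hX : X.IsHermitian) :
    X.trace = ∑ i, (hX.eigenvalues i : ℂ) := by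
  conv_lhs => rw [hX.spectral_theorem, Unitary.conjStarAlgAut_apply]
  rw [Matrix.trace_mul_cycle]
  rw [Matrix.star_eq_conjTranspose]
  rw [show (hX.eigenvectorUnitary : Matrix (Fin n) (Fin n) ℂ)ᴴ *
      (hX.eigenvectorUnitary : Matrix (Fin n) (Fin n) ℂ) = 1 from
    Matrix.mem_unitaryGroup_iff'.mp hX.eigenvectorUnitary.2]
  simp [Matrix.trace, Matrix.diag]

lemma herm_sub_smul_one_psd (hX : X.IsHermitian) (c : ℝ)
    (h : ∀ i, c ≤ hX.eigenvalues i) : (X - (c : ℂ) • 1).PosSemidef := by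
  have hU : (hX.eigenvectorUnitary : Matrix (Fin n) (Fin n) ℂ) *
      (hX.eigenvectorUnitary : Matrix (Fin n) (Fin n) ℂ)ᴴ = 1 :=
    Matrix.mem_unitaryGroup_iff.mp hX.eigenvectorUnitary.2
  set U := (hX.eigenvectorUnitary : Matrix (Fin n) (Fin n) ℂ)
  have key : X - (c : ℂ) • 1 =
      U * (diagonal (fun i => ((hX.eigenvalues i - c : ℝ) : ℂ))) * Uᴴ := by
    have h1 : ((c : ℂ) • 1 : Matrix (Fin n) (Fin n) ℂ) = U * ((c : ℂ) • 1) * Uᴴ := by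
      rw [Matrix.mul_smul, Matrix.mul_one, Matrix.smul_mul, hU]
    conv_lhs => rw [hX.spectral_theorem, Unitary.conjStarAlgAut_apply,
        Matrix.star_eq_conjTranspose, h1]
    rw [← Matrix.sub_mul, ← Matrix.mul_sub]
    congr 1
    congr 1
    ext i j
    by_cases hij : i = j
    · subst hij
      simp [Matrix.diagonal_apply_eq, Matrix.one_apply, Complex.ofReal_sub]
    · simp [Matrix.diagonal_apply_ne _ hij, Matrix.one_apply, hij]
  rw [key]
  exact (Matrix.PosSemidef.diagonal (fun i => by
    simpa using Complex.zero_le_real.mpr (sub_nonneg.mpr (h i)))).mul_mul_conjTranspose_same U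

lemma herm_eigenvalues_le_of_psd (hX : X.IsHermitian) (c : ℝ)
    (hc : ((c : ℂ) • 1 - X).PosSemidef) (i : Fin n) : hX.eigenvalues i ≤ c := by
  set v : Fin n → ℂ := ⇑(hX.eigenvectorBasis i)
  have hvv : dotProduct (star v) v = 1 := by
    have h1 : (inner ℂ (hX.eigenvectorBasis i) (hX.eigenvectorBasis i) : ℂ) =
        dotProduct (star v) v := by
      rw [EuclideanSpace.inner_eq_star_dotProduct, dotProduct_comm]
    rw [← h1, inner_self_eq_norm_sq_to_K, hX.eigenvectorBasis.orthonormal.1 i]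
    norm_num
  have h2 := hc.dotProduct_mulVec_nonneg v
  have h3 : dotProduct (star v) (((c : ℂ) • 1 - X) *ᵥ v) = ((c - hX.eigenvalues i : ℝ) : ℂ) := by
    rw [Matrix.sub_mulVec, dotProduct_sub, hX.mulVec_eigenvectorBasis]
    rw [Matrix.smul_mulVec, Matrix.one_mulVec]
    rw [dotProduct_smul, dotProduct_smul, hvv]
    simp [Complex.real_smul, smul_eq_mul]
  rw [h3] at h2
  have := (Complex.le_def.mp h2).1
  simpa using this
end herm
section mainaux
variable {n k : ℕ}

-- algebraic identity helpers
lemma proj_idem {α β : Type*} [Fintype α] [Fintype β] [DecidableEq α] [DecidableEq β]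
    (C : Matrix α β ℂ) (h : Cᴴ * C = 1) : (C * Cᴴ) * (C * Cᴴ) = C * Cᴴ := by
  rw [Matrix.mul_assoc, ← Matrix.mul_assoc Cᴴ, h, Matrix.one_mul]

lemma proj_one_sub_idem {α β : Type*} [Fintype α] [Fintype β] [DecidableEq α] [DecidableEq β]
    (C : Matrix α β ℂ) (h : Cᴴ * C = 1) :
    ((1 : Matrix α α ℂ) - C * Cᴴ) * ((1 : Matrix α α ℂ) - C * Cᴴ) = 1 - C * Cᴴ := by
  have h2 := proj_idem C h
  rw [Matrix.mul_sub, Matrix.sub_mul, Matrix.sub_mul, h2]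
  simp only [Matrix.mul_one, Matrix.one_mul]
  abel

lemma proj_one_sub_psd {α β : Type*} [Fintype α] [Fintype β] [DecidableEq α] [DecidableEq β]
    (C : Matrix α β ℂ) (h : Cᴴ * C = 1) :
    ((1 : Matrix α α ℂ) - C * Cᴴ).PosSemidef := by
  have key := Matrix.posSemidef_conjTranspose_mul_self (1 - C * Cᴴ)
  have hh : ((1 : Matrix α α ℂ) - C * Cᴴ)ᴴ = 1 - C * Cᴴ := by
    simp [Matrix.conjTranspose_sub, Matrix.conjTranspose_mul]
  rw [hh, proj_one_sub_idem C h] at key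
  exact key

end mainaux
set_option maxHeartbeats 2000000 in
lemma main_aux {n k : ℕ} (hkn : k < n)
    {H : Matrix (Fin n) (Fin n) ℂ} (hH : H.IsHermitian)
    (Pstar P : Matrix (Fin n) (Fin k) ℂ)
    (hPstar : Pstarᴴ * Pstar = 1) (hP : Pᴴ * P = 1)
    (hinv : H * Pstar = Pstar * (Pstarᴴ * H * Pstar))
    (hM : (Pstarᴴ * H * Pstar).IsHermitian)
    {a b : ℝ} (hab : b < a)
    (hMeig : ∀ j : Fin k, a ≤ hM.eigenvalues j)
    (htr : (Pstarᴴ * H * Pstar).trace.re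
        = ∑ i ∈ Finset.univ.filter (fun i => b < hH.eigenvalues i), hH.eigenvalues i)
    (hcard : (Finset.univ.filter (fun i => b < hH.eigenvalues i)).card = k) :
    sinThetaF P Pstar ≤
      Real.sqrt (((Pstarᴴ * H * Pstar).trace.re - (Pᴴ * H * P).trace.re) / (a - b)) := by
  classical
  -- projections
  set K : Matrix (Fin n) (Fin n) ℂ := Pstar * Pstarᴴ with hKdef
  have hKpsd : K.PosSemidef := Matrix.posSemidef_self_mul_conjTranspose Pstar
  have hKK : K * K = K := proj_idem Pstar hPstar
  have hR0idem : ((1 : Matrix (Fin n) (Fin n) ℂ) - K) * (1 - K) = 1 - K :=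
    proj_one_sub_idem Pstar hPstar
  have hR0psd : ((1 : Matrix (Fin n) (Fin n) ℂ) - K).PosSemidef := proj_one_sub_psd Pstar hPstar
  -- invariance identities
  have e1 : H * K = Pstar * (Pstarᴴ * H * Pstar) * Pstarᴴ := by
    rw [hKdef, ← Matrix.mul_assoc, hinv]
  have e2 : K * H = Pstar * (Pstarᴴ * H * Pstar) * Pstarᴴ := by
    have := congrArg Matrix.conjTranspose e1
    simp only [Matrix.conjTranspose_mul, Matrix.conjTranspose_conjTranspose, hH.eq,
      hM.eq] at this
    rw [hKdef]
    rw [show (Pstar * Pstarᴴ)ᴴ = Pstar * Pstarᴴ from by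
      simp [Matrix.conjTranspose_mul]] at this
    rw [this]
    simp only [Matrix.mul_assoc]
  have e3 : K * H * K = Pstar * (Pstarᴴ * H * Pstar) * Pstarᴴ := by
    rw [e2, hKdef]
    simp only [Matrix.mul_assoc]
    rw [← Matrix.mul_assoc Pstarᴴ Pstar Pstarᴴ, hPstar, Matrix.one_mul]
  have hsplit : Pstar * (Pstarᴴ * H * Pstar) * Pstarᴴ + (1 - K) * H * (1 - K) = H := by
    have key : ((1 : Matrix (Fin n) (Fin n) ℂ) - K) * H * (1 - K)
        = H - K * H - H * K + K * H * K := by noncomm_ring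
    rw [key, e3, e1, e2]
    abel
  -- real trace quantities
  set trM : ℝ := (Pstarᴴ * H * Pstar).trace.re with htrM
  set trA : ℝ := ((Pstarᴴ * P) * (Pᴴ * Pstar)).trace.re with htrA
  set t1 : ℝ := ((Pstarᴴ * H * Pstar) * ((Pstarᴴ * P) * (Pᴴ * Pstar))).trace.re with ht1
  set t2 : ℝ := (Pᴴ * ((1 - K) * H * (1 - K)) * P).trace.re with ht2
  -- trace splitting
  have G3 : (Pᴴ * H * P).trace.re = t1 + t2 := by
    have h0 : Pᴴ * H * P
        = Pᴴ * (Pstar * (Pstarᴴ * H * Pstar) * Pstarᴴ) * P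
          + Pᴴ * ((1 - K) * H * (1 - K)) * P := by
      conv_lhs => rw [← hsplit]
      rw [Matrix.mul_add, Matrix.add_mul]
    have h1 : (Pᴴ * (Pstar * (Pstarᴴ * H * Pstar) * Pstarᴴ) * P).trace
        = ((Pstarᴴ * H * Pstar) * ((Pstarᴴ * P) * (Pᴴ * Pstar))).trace := by
      rw [show Pᴴ * (Pstar * (Pstarᴴ * H * Pstar) * Pstarᴴ) * P
          = (Pᴴ * Pstar) * ((Pstarᴴ * H * Pstar) * (Pstarᴴ * P)) from by
        simp only [Matrix.mul_assoc]]
      rw [Matrix.trace_mul_comm, Matrix.mul_assoc]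
    rw [h0, Matrix.trace_add, Complex.add_re, h1]
  -- part 1 inequality
  have hX1psd : ((Pstarᴴ * H * Pstar) - (a : ℂ) • 1).PosSemidef :=
    herm_sub_smul_one_psd hM a hMeig
  have hX3psd : ((1 : Matrix (Fin k) (Fin k) ℂ) - (Pstarᴴ * P) * (Pᴴ * Pstar)).PosSemidef := by
    have h := proj_one_sub_psd P hP
    have hid : (1 : Matrix (Fin k) (Fin k) ℂ) - (Pstarᴴ * P) * (Pᴴ * Pstar)
        = Pstarᴴ * ((1 : Matrix (Fin n) (Fin n) ℂ) - P * Pᴴ) * Pstar := by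
      rw [Matrix.mul_sub, Matrix.sub_mul, Matrix.mul_one, hPstar]
      simp only [Matrix.mul_assoc]
    rw [hid]
    exact h.conjTranspose_mul_mul_same Pstar
  have G1 : a * (k - trA) ≤ trM - t1 := by
    have h0 := psd_trace_mul_re_nonneg hX1psd hX3psd
    have hexp : (((Pstarᴴ * H * Pstar) - (a : ℂ) • 1)
          * ((1 : Matrix (Fin k) (Fin k) ℂ) - (Pstarᴴ * P) * (Pᴴ * Pstar))).trace
        = (Pstarᴴ * H * Pstar).trace
          - ((Pstarᴴ * H * Pstar) * ((Pstarᴴ * P) * (Pᴴ * Pstar))).trace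
          - (a : ℂ) * (k : ℂ) + (a : ℂ) * (((Pstarᴴ * P) * (Pᴴ * Pstar)).trace) := by
      rw [Matrix.sub_mul, Matrix.mul_sub, Matrix.mul_sub]
      simp only [Matrix.mul_one, Matrix.one_mul, Matrix.smul_mul, Matrix.trace_sub,
        Matrix.trace_smul, Matrix.trace_one, Fintype.card_fin, smul_eq_mul]
      ring
    rw [hexp] at h0
    simp only [Complex.add_re, Complex.sub_re, Complex.mul_re, Complex.ofReal_re,
      Complex.ofReal_im, Complex.natCast_re, Complex.natCast_im, mul_zero, zero_mul,
      sub_zero] at h0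
    rw [← htrM, ← ht1, ← htrA] at h0
    nlinarith [h0]
  -- spectral setup
  have hU1 : (hH.eigenvectorUnitary : Matrix (Fin n) (Fin n) ℂ)
      * (hH.eigenvectorUnitary : Matrix (Fin n) (Fin n) ℂ)ᴴ = 1 :=
    Matrix.mem_unitaryGroup_iff.mp hH.eigenvectorUnitary.2
  have hU2 : (hH.eigenvectorUnitary : Matrix (Fin n) (Fin n) ℂ)ᴴ
      * (hH.eigenvectorUnitary : Matrix (Fin n) (Fin n) ℂ) = 1 :=
    Matrix.mem_unitaryGroup_iff'.mp hH.eigenvectorUnitary.2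
  set U : Matrix (Fin n) (Fin n) ℂ := (hH.eigenvectorUnitary : Matrix (Fin n) (Fin n) ℂ)
    with hUdef
  set D : Matrix (Fin n) (Fin n) ℂ := Matrix.diagonal (fun i => ((hH.eigenvalues i : ℝ) : ℂ))
    with hDdef
  have hspec : H = U * D * Uᴴ := by
    have := hH.spectral_theorem
    rwa [Unitary.conjStarAlgAut_apply, Matrix.star_eq_conjTranspose] at this
  set T : Matrix (Fin n) (Fin n) ℂ := Uᴴ * K * U with hTdef
  have hTpsd : T.PosSemidef := hKpsd.conjTranspose_mul_mul_same U
  have honeT : (1 : Matrix (Fin n) (Fin n) ℂ) - T = Uᴴ * (1 - K) * U := by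
    rw [Matrix.mul_sub, Matrix.sub_mul, Matrix.mul_one, hU2]
  have hT1psd : ((1 : Matrix (Fin n) (Fin n) ℂ) - T).PosSemidef := by
    rw [honeT]; exact hR0psd.conjTranspose_mul_mul_same U
  set c : Fin n → ℝ := fun i => (T i i).re with hcdef
  have hTii : ∀ i, T i i = ((c i : ℝ) : ℂ) := by
    intro i
    have h := psd_diag_nonneg hTpsd i
    have := (Complex.le_def.mp h).2
    exact Complex.ext rfl (by simpa using this.symm)
  have hc1 : ∀ i, c i ≤ 1 := by
    intro i
    have h := psd_diag_nonneg hT1psd i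
    have h2 := (Complex.le_def.mp h).1
    simp only [Matrix.sub_apply, Matrix.one_apply_eq, Complex.sub_re, Complex.one_re,
      Complex.zero_re] at h2
    linarith
  -- sum of c equals k
  have hsumc : ∑ i, c i = (k : ℝ) := by
    have h1 : T.trace = ((k : ℕ) : ℂ) := by
      rw [hTdef, Matrix.trace_mul_cycle, hU1, Matrix.one_mul, hKdef,
        Matrix.trace_mul_comm, hPstar, Matrix.trace_one]
      simp
    have h2 : T.trace.re = ∑ i, c i := by
      simp [Matrix.trace, Matrix.diag, Complex.re_sum, hcdef]
    rw [← h2, h1]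
    simp
  -- weighted sum of c equals trM
  have hsumlc : ∑ i, hH.eigenvalues i * c i = trM := by
    have h1 : (T * D).trace = (Pstarᴴ * H * Pstar).trace := by
      have e : T * D = Uᴴ * (K * (U * D)) := by rw [hTdef]; simp only [Matrix.mul_assoc]
      rw [e, Matrix.trace_mul_comm]
      rw [show K * (U * D) * Uᴴ = K * H from by
        conv_rhs => rw [hspec]
        simp only [Matrix.mul_assoc]]
      rw [e2, Matrix.trace_mul_cycle Pstar (Pstarᴴ * H * Pstar) Pstarᴴ, hPstar,
        Matrix.one_mul]
    have h2 : (T * D).trace = ∑ i, (T i i) * ((hH.eigenvalues i : ℝ) : ℂ) := by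
      rw [hDdef]
      simp [Matrix.trace, Matrix.diag, Matrix.mul_diagonal]
    have h3 : (T * D).trace.re = ∑ i, hH.eigenvalues i * c i := by
      rw [h2, Complex.re_sum]
      congr 1
      ext i
      rw [hTii i]
      simp [← Complex.ofReal_mul]
      ring
    rw [← h3, h1]
  -- the LP equality argument
  have hci : ∀ i, b < hH.eigenvalues i → c i = 1 := by
    have hw0 : ∑ i, (hH.eigenvalues i - b)
        * ((if b < hH.eigenvalues i then (1 : ℝ) else 0) - c i) = 0 := by
      have e1 : ∑ i, (hH.eigenvalues i - b) * (if b < hH.eigenvalues i then (1 : ℝ) else 0)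
          = trM - b * k := by
        simp only [mul_ite, mul_one, mul_zero]
        rw [← Finset.sum_filter]
        rw [Finset.sum_sub_distrib, Finset.sum_const, hcard, ← htr]
        simp [mul_comm]
      have e2 : ∑ i, (hH.eigenvalues i - b) * c i = trM - b * k := by
        simp only [sub_mul]
        rw [Finset.sum_sub_distrib, hsumlc, ← Finset.mul_sum, hsumc]
      simp only [mul_sub]
      rw [Finset.sum_sub_distrib, e1, e2, sub_self]
    intro i hi
    have hnn : ∀ j ∈ Finset.univ, 0 ≤ (hH.eigenvalues j - b)
        * ((if b < hH.eigenvalues j then (1 : ℝ) else 0) - c j) := by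
      intro j _
      by_cases hj : b < hH.eigenvalues j
      · simp only [hj, if_pos]
        have := hc1 j
        nlinarith
      · simp only [hj, if_neg, not_false_iff]
        push_neg at hj
        have hcj : 0 ≤ c j := by
          have h := psd_diag_nonneg hTpsd j
          exact (Complex.le_def.mp h).1
        nlinarith
    have := (Finset.sum_eq_zero_iff_of_nonneg hnn).mp hw0 i (Finset.mem_univ i)
    rw [if_pos hi] at this
    rcases mul_eq_zero.mp this with h | h
    · linarith
    · linarith
  have hcol : ∀ i, b < hH.eigenvalues i → ∀ j,
      ((1 : Matrix (Fin n) (Fin n) ℂ) - T) j i = 0 := by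
    intro i hi j
    apply psd_col_zero hT1psd _ j
    simp only [Matrix.sub_apply, Matrix.one_apply_eq]
    rw [hTii i, hci i hi]
    simp
  -- R and the diagonal split
  set R : Matrix (Fin n) (Fin n) ℂ := 1 - T with hRdef
  clear_value R
  have hRherm : Rᴴ = R := hT1psd.isHermitian
  have hRidem : R * R = R := by
    rw [honeT]
    calc Uᴴ * (1 - K) * U * (Uᴴ * (1 - K) * U)
        = Uᴴ * ((1 - K) * ((U * Uᴴ) * ((1 - K) * U))) := by simp only [Matrix.mul_assoc]
      _ = Uᴴ * ((1 - K) * (1 - K) * U) := by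
          rw [hU1]
          simp only [Matrix.one_mul, Matrix.mul_assoc]
      _ = Uᴴ * (1 - K) * U := by rw [hR0idem, Matrix.mul_assoc]
  have hRcol : ∀ j i, b < hH.eigenvalues i → R j i = 0 := fun j i hi => hcol i hi j
  set g : Fin n → ℂ := fun i => ((b - hH.eigenvalues i : ℝ) : ℂ) with hgdef
  set dp : Fin n → ℂ := fun i => ((max (b - hH.eigenvalues i) 0 : ℝ) : ℂ) with hdpdef
  set dm : Fin n → ℂ := fun i => ((max (hH.eigenvalues i - b) 0 : ℝ) : ℂ) with hdmdef
  have hreal : ∀ i, (b - hH.eigenvalues i)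
      = max (b - hH.eigenvalues i) 0 - max (hH.eigenvalues i - b) 0 := by
    intro i
    rcases le_total (hH.eigenvalues i) b with h | h
    · rw [max_eq_left (by linarith), max_eq_right (by linarith)]; ring
    · rw [max_eq_right (by linarith), max_eq_left (by linarith)]; ring
  have hgsplit : Matrix.diagonal g = Matrix.diagonal dp - Matrix.diagonal dm := by
    ext i j
    by_cases h : i = j
    · subst h
      simp only [Matrix.sub_apply, Matrix.diagonal_apply_eq, hgdef, hdpdef, hdmdef,
        ← Complex.ofReal_sub]
      exact congrArg _ (hreal i)
    · simp [Matrix.diagonal_apply_ne _ h]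
  have hRdm : R * Matrix.diagonal dm = 0 := by
    ext j i
    rw [Matrix.mul_diagonal]
    by_cases hi : b < hH.eigenvalues i
    · rw [hRcol j i hi]; simp
    · push_neg at hi
      rw [hdmdef]
      simp only [Matrix.zero_apply]
      rw [max_eq_right (by linarith)]
      simp
  have hZpsd : (R * Matrix.diagonal g * R).PosSemidef := by
    rw [hgsplit, Matrix.mul_sub, Matrix.sub_mul, hRdm, Matrix.zero_mul, sub_zero]
    have hdppsd : (Matrix.diagonal dp).PosSemidef := Matrix.PosSemidef.diagonal (fun i => by
      rw [hdpdef]; exact Complex.zero_le_real.mpr (le_max_right _ _))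
    have := hdppsd.conjTranspose_mul_mul_same R
    rwa [hRherm] at this
  have hUR : U * R * Uᴴ = 1 - K := by
    rw [honeT]
    calc U * (Uᴴ * (1 - K) * U) * Uᴴ = (U * Uᴴ) * (1 - K) * (U * Uᴴ) := by
          simp only [Matrix.mul_assoc]
      _ = 1 - K := by rw [hU1]; simp
  have hX2psd : ((b : ℂ) • ((1 : Matrix (Fin n) (Fin n) ℂ) - K)
      - (1 - K) * H * (1 - K)).PosSemidef := by
    have hGd : R * Matrix.diagonal g * R = (b : ℂ) • R - R * D * R := by
      have hdg : Matrix.diagonal g = (b : ℂ) • (1 : Matrix (Fin n) (Fin n) ℂ) - D := by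
        rw [hDdef]
        ext i i'
        by_cases h : i = i'
        · subst h
          simp [hgdef, Matrix.diagonal_apply_eq, Complex.ofReal_sub, Matrix.one_apply_eq]
        · simp [Matrix.diagonal_apply_ne _ h, Matrix.one_apply, h]
      rw [hdg, Matrix.mul_sub, Matrix.sub_mul, Matrix.mul_smul, Matrix.mul_one,
        Matrix.smul_mul, hRidem]
    have key : U * (R * Matrix.diagonal g * R) * Uᴴ
        = (b : ℂ) • ((1 : Matrix (Fin n) (Fin n) ℂ) - K) - (1 - K) * H * (1 - K) := by
      rw [hGd, Matrix.mul_sub U, Matrix.sub_mul _ _ Uᴴ]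
      congr 1
      · rw [Matrix.mul_smul, Matrix.smul_mul, hUR]
      · rw [← hUR]
        conv_rhs => rw [hspec]
        calc U * (R * D * R) * Uᴴ
            = U * (R * ((Uᴴ * U) * (D * ((Uᴴ * U) * (R * Uᴴ))))) := by
              rw [hU2]
              simp only [Matrix.one_mul, Matrix.mul_assoc]
          _ = (U * R * Uᴴ) * (U * D * Uᴴ) * (U * R * Uᴴ) := by
              simp only [Matrix.mul_assoc]
    rw [← key]
    exact hZpsd.mul_mul_conjTranspose_same U
  -- part 2 inequality
  have G2 : t2 ≤ b * (k - trA) := by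
    have h0 := psd_re_trace_nonneg (hX2psd.conjTranspose_mul_mul_same P)
    have hexp : Pᴴ * ((b : ℂ) • ((1 : Matrix (Fin n) (Fin n) ℂ) - K)
          - (1 - K) * H * (1 - K)) * P
        = (b : ℂ) • (Pᴴ * ((1 : Matrix (Fin n) (Fin n) ℂ) - K) * P)
          - Pᴴ * ((1 - K) * H * (1 - K)) * P := by
      rw [Matrix.mul_sub, Matrix.sub_mul, Matrix.mul_smul, Matrix.smul_mul]
    have htr2 : (Pᴴ * ((1 : Matrix (Fin n) (Fin n) ℂ) - K) * P).trace
        = ((k : ℕ) : ℂ) - ((Pstarᴴ * P) * (Pᴴ * Pstar)).trace := by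
      have hPKP : Pᴴ * ((1 : Matrix (Fin n) (Fin n) ℂ) - K) * P
          = Pᴴ * P - (Pᴴ * Pstar) * (Pstarᴴ * P) := by
        rw [Matrix.mul_sub, Matrix.sub_mul, Matrix.mul_one, hKdef]
        simp only [Matrix.mul_assoc]
      rw [hPKP, Matrix.trace_sub, hP, Matrix.trace_one, Matrix.trace_mul_comm]
      simp
    rw [hexp] at h0
    rw [Matrix.trace_sub, Matrix.trace_smul, htr2] at h0
    simp only [Complex.sub_re, smul_eq_mul, Complex.mul_re, Complex.ofReal_re,
      Complex.ofReal_im, Complex.natCast_re, Complex.natCast_im, Complex.sub_im,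
      mul_zero, zero_mul, sub_zero] at h0
    rw [← htrA, ← ht2] at h0
    nlinarith [h0]
  -- the sine identity
  have hBpsd := Matrix.posSemidef_conjTranspose_mul_self (Pᴴ * Pstar)
  have hBB : (Pᴴ * Pstar)ᴴ * (Pᴴ * Pstar) = (Pstarᴴ * P) * (Pᴴ * Pstar) := by
    rw [Matrix.conjTranspose_mul, Matrix.conjTranspose_conjTranspose]
  have hnu0 : ∀ i, 0 ≤ hBpsd.isHermitian.eigenvalues i := hBpsd.eigenvalues_nonneg
  have hnu1 : ∀ i, hBpsd.isHermitian.eigenvalues i ≤ 1 := by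
    apply herm_eigenvalues_le_of_psd hBpsd.isHermitian 1
    rw [show ((1 : ℝ) : ℂ) • (1 : Matrix (Fin k) (Fin k) ℂ) = 1 from by simp]
    rw [hBB]
    exact hX3psd
  have hsum_sin : ∑ i, Real.sin (Real.arccos (sv (Pᴴ * Pstar) i)) ^ 2
      = (k : ℝ) - trA := by
    have h1 : ∑ i, Real.sin (Real.arccos (sv (Pᴴ * Pstar) i)) ^ 2
        = ∑ i, Real.sin (Real.arccos (Real.sqrt (hBpsd.isHermitian.eigenvalues i))) ^ 2 :=
      sum_comp_sortedDesc _ (fun x => Real.sin (Real.arccos x) ^ 2)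
    have h2 : ∀ i, Real.sin (Real.arccos (Real.sqrt (hBpsd.isHermitian.eigenvalues i))) ^ 2
        = 1 - hBpsd.isHermitian.eigenvalues i := by
      intro i
      rw [Real.sin_arccos, Real.sq_sqrt (hnu0 i), Real.sq_sqrt (by linarith [hnu1 i])]
    have h3 : trA = ∑ i, hBpsd.isHermitian.eigenvalues i := by
      rw [htrA, ← hBB, herm_trace_eq_sum_eigenvalues hBpsd.isHermitian, Complex.re_sum]
      simp
    rw [h1, Finset.sum_congr rfl (fun i _ => h2 i), Finset.sum_sub_distrib,
      Finset.sum_const, Finset.card_univ, Fintype.card_fin, ← h3]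
    simp
  -- conclude
  have hSnn : (0 : ℝ) ≤ (k : ℝ) - trA := by
    rw [← hsum_sin]
    exact Finset.sum_nonneg fun i _ => sq_nonneg _
  have hmain : ((k : ℝ) - trA) * (a - b) ≤ trM - (Pᴴ * H * P).trace.re := by
    rw [G3]
    nlinarith [G1, G2]
  unfold sinThetaF
  rw [hsum_sin]
  apply Real.sqrt_le_sqrt
  rw [le_div_iff₀ (by linarith : (0 : ℝ) < a - b)]
  linarith [hmain]
theorem sinTheta_le_sqrt_eta_div_gap {n k : ℕ} (hk : 0 < k) (hkn : k < n)
    {H : Matrix (Fin n) (Fin n) ℂ} (hH : H.IsHermitian)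
    (Pstar P : Matrix (Fin n) (Fin k) ℂ)
    (hPstar : Pstarᴴ * Pstar = 1) (hP : Pᴴ * P = 1)
    (hinv : H * Pstar = Pstar * (Pstarᴴ * H * Pstar))
    (hM : (Pstarᴴ * H * Pstar).IsHermitian)
    (htop : ∀ i : Fin k, eigsDesc hM i = eigsDesc hH (Fin.castLE hkn.le i))
    (hgap : eigsDesc hH ⟨k, hkn⟩ < eigsDesc hH ⟨k - 1, by omega⟩) :
    sinThetaF P Pstar ≤
      Real.sqrt (((Matrix.trace (Pstarᴴ * H * Pstar)).re - (Matrix.trace (Pᴴ * H * P)).re) /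
        (eigsDesc hH ⟨k - 1, by omega⟩ - eigsDesc hH ⟨k, hkn⟩)) := by
  classical
  have hk1 : k - 1 < k := Nat.sub_lt hk one_pos
  have hk1n : k - 1 < n := by omega
  have hab : eigsDesc hH ⟨k, hkn⟩ < eigsDesc hH ⟨k - 1, hk1n⟩ := hgap
  -- eigenvalues of M are all at least a
  have hMeig : ∀ j : Fin k, eigsDesc hH ⟨k - 1, hk1n⟩ ≤ hM.eigenvalues j := by
    intro j
    obtain ⟨j', hj'⟩ := exists_sortedDesc_eq hM.eigenvalues j
    rw [← hj']
    have hle : j' ≤ (⟨k - 1, hk1⟩ : Fin k) := by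
      rw [Fin.le_def]
      have := j'.isLt
      simp only
      omega
    have h2 := antitone_sortedDesc hM.eigenvalues hle
    have h3 := htop ⟨k - 1, hk1⟩
    calc eigsDesc hH ⟨k - 1, hk1n⟩ = eigsDesc hM ⟨k - 1, hk1⟩ := h3.symm
      _ ≤ sortedDesc hM.eigenvalues j' := h2
  -- the sorted filter set is an initial segment
  have hset : Finset.univ.filter
        (fun i : Fin n => eigsDesc hH ⟨k, hkn⟩ < sortedDesc hH.eigenvalues i)
      = Finset.univ.filter (fun i : Fin n => (i : ℕ) < k) := by
    ext i
    simp only [Finset.mem_filter, Finset.mem_univ, true_and]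
    constructor
    · intro h
      by_contra hik
      push_neg at hik
      have h5 : (⟨k, hkn⟩ : Fin n) ≤ i := by rw [Fin.le_def]; simpa using hik
      have h6 := antitone_sortedDesc hH.eigenvalues h5
      exact absurd h (not_lt.mpr h6)
    · intro h
      have h5 : i ≤ (⟨k - 1, hk1n⟩ : Fin n) := by
        rw [Fin.le_def]
        simp only
        omega
      have h6 := antitone_sortedDesc hH.eigenvalues h5
      calc eigsDesc hH ⟨k, hkn⟩ < eigsDesc hH ⟨k - 1, hk1n⟩ := hab
        _ ≤ sortedDesc hH.eigenvalues i := h6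
  have hmap : Finset.univ.filter (fun i : Fin n => (i : ℕ) < k)
      = Finset.univ.map (Fin.castLEEmb hkn.le) := by
    ext i
    simp only [Finset.mem_filter, Finset.mem_univ, true_and, Finset.mem_map]
    constructor
    · intro h
      exact ⟨⟨i, h⟩, rfl⟩
    · rintro ⟨j, -, rfl⟩
      simpa using j.isLt
  -- cardinality
  have hcard : (Finset.univ.filter
      (fun i : Fin n => eigsDesc hH ⟨k, hkn⟩ < hH.eigenvalues i)).card = k := by
    have t := filter_sum_sortedDesc hH.eigenvalues
      (fun x => eigsDesc hH ⟨k, hkn⟩ < x) (fun _ => (1 : ℝ))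
    rw [hset, hmap] at t
    simp only [Finset.sum_const, Finset.card_map, Finset.card_univ, Fintype.card_fin,
      nsmul_eq_mul, mul_one] at t
    exact_mod_cast t.symm
  -- trace of M
  have htr : (Pstarᴴ * H * Pstar).trace.re = ∑ i ∈ Finset.univ.filter
      (fun i : Fin n => eigsDesc hH ⟨k, hkn⟩ < hH.eigenvalues i), hH.eigenvalues i := by
    have s1 : (Pstarᴴ * H * Pstar).trace.re = ∑ j, hM.eigenvalues j := by
      rw [herm_trace_eq_sum_eigenvalues hM, Complex.re_sum]
      simp
    have s2 : ∑ j, hM.eigenvalues j = ∑ j : Fin k, sortedDesc hM.eigenvalues j :=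
      (sum_comp_sortedDesc hM.eigenvalues id).symm
    have s3 : ∑ j : Fin k, sortedDesc hM.eigenvalues j
        = ∑ j : Fin k, sortedDesc hH.eigenvalues (Fin.castLE hkn.le j) :=
      Finset.sum_congr rfl (fun j _ => htop j)
    have s4 : ∑ j : Fin k, sortedDesc hH.eigenvalues (Fin.castLE hkn.le j)
        = ∑ i ∈ Finset.univ.filter (fun i : Fin n => (i : ℕ) < k),
            sortedDesc hH.eigenvalues i := by
      rw [hmap, Finset.sum_map]
      rfl
    have s6 := filter_sum_sortedDesc hH.eigenvalues
      (fun x => eigsDesc hH ⟨k, hkn⟩ < x) id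
    rw [hset] at s6
    simp only [id] at s6
    rw [s1, s2, s3, s4, ← s6]
  exact main_aux hkn hH Pstar P hPstar hP hinv hM hab hMeig htr hcard
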